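/- Let n ≥ 2, a_0, …, a_n real, a ∈ (−1,1), 0 < r ≤ 1/2. Let u_k(a) be the Clenshaw sequence of p at a, and let M > 0 satisfy |u_k(a)| ≤ M for 1 ≤ k ≤ n. Define e_n = 0, f_n = 0, and for k = n−1 down to 1: f_k = 2r·|u_{k+1}(a)| + 2r·e_{k+1} + f_{k+1} and e_k = min(e_{k+1} + f_k, f_k/√(1−a²)). Then for all k with 1 ≤ k ≤ n: f_k ≤ (3/2)·M·√(1−a²)·[(1 + 2r/√(1−a²))^n − 1]. -/

import Mathlib

open Finset

/-- Intermediate bound in the forward error analysis of the ball Clenshaw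
algorithm: `fₖ ≤ (3/2)M√(1-a²)[(1+2r/√(1-a²))ⁿ − 1]`. -/
theorem ball_clenshaw_forward_intermediate_bound_f (n : ℕ) (hn : 2 ≤ n) (a : ℕ → ℝ)
    (c : ℝ) (hc : c ∈ Set.Ioo (-1 : ℝ) 1) (r : ℝ) (hr : 0 < r) (hr2 : r ≤ 1 / 2)
    (u : ℕ → ℝ) (hun1 : u (n + 1) = 0) (hun : u n = a n)
    (hurec : ∀ k, 1 ≤ k → k ≤ n - 1 → u k = 2 * c * u (k + 1) - u (k + 2) + a k)
    (M : ℝ) (hM : 0 < M) (hMu : ∀ k, 1 ≤ k → k ≤ n → |u k| ≤ M)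
    (e f : ℕ → ℝ) (hen : e n = 0) (hfn : f n = 0)
    (href : ∀ k, 1 ≤ k → k ≤ n - 1 →
      f k = 2 * r * |u (k + 1)| + 2 * r * e (k + 1) + f (k + 1) ∧
      e k = min (e (k + 1) + f k) (f k / Real.sqrt (1 - c ^ 2))) :
    ∀ k, 1 ≤ k → k ≤ n →
      f k ≤ (3 / 2) * M * Real.sqrt (1 - c ^ 2) *
        ((1 + 2 * r / Real.sqrt (1 - c ^ 2)) ^ n - 1) := by
  obtain ⟨hc1, hc2⟩ := hc
  set s := Real.sqrt (1 - c ^ 2) with hs_def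
  have hs : 0 < s := Real.sqrt_pos.mpr (by nlinarith)
  set t := 1 + 2 * r / s with ht_def
  have ht1 : 1 ≤ t := by
    have : 0 < 2 * r / s := by positivity
    simp only [ht_def]; linarith
  have key : ∀ j k, 1 ≤ k → k + j = n → f k ≤ M * s * (t ^ j - 1) := by
    intro j
    induction j with
    | zero =>
      intro k hk1 hkn
      simp only [Nat.add_zero] at hkn
      subst hkn
      simp [hfn]
    | succ j ih =>
      intro k hk1 hkn
      have hkn1 : k ≤ n - 1 := by omega
      obtain ⟨hfk, -⟩ := href k hk1 hkn1
      have hu : |u (k + 1)| ≤ M := hMu (k + 1) (by omega) (by omega)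
      have hfk1 : f (k + 1) ≤ M * s * (t ^ j - 1) := ih (k + 1) (by omega) (by omega)
      have hek1 : e (k + 1) ≤ f (k + 1) / s := by
        rcases eq_or_lt_of_le (show k + 1 ≤ n by omega) with h | h
        · rw [h, hen, hfn]; simp
        · obtain ⟨-, he⟩ := href (k + 1) (by omega) (by omega)
          rw [he]; exact min_le_right _ _
      have hcan : 2 * r * (f (k + 1) / s) = 2 * r / s * f (k + 1) := by
        field_simp
      have hbound : f k ≤ 2 * r * M + t * f (k + 1) := by
        rw [hfk, ht_def]
        have h1 : 2 * r * e (k + 1) ≤ 2 * r * (f (k + 1) / s) := by nlinarith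
        nlinarith
      have h2 : t * f (k + 1) ≤ t * (M * s * (t ^ j - 1)) := by nlinarith
      have halg : 2 * r * M + t * (M * s * (t ^ j - 1)) = M * s * (t ^ (j + 1) - 1) := by
        have hts : t * s = s + 2 * r := by
          rw [ht_def, add_mul, div_mul_cancel₀ _ hs.ne']; ring
        linear_combination (-M) * hts
      linarith
  intro k hk1 hkn
  have h1 := key (n - k) k hk1 (by omega)
  have hMs : 0 ≤ M * s := by positivity
  have hpow : t ^ (n - k) ≤ t ^ n := pow_le_pow_right₀ ht1 (by omega)
  have htn : 1 ≤ t ^ n := one_le_pow₀ ht1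
  nlinarith
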